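/- Let E be a real Banach space (or ℝⁿ), V : E → ℝ a twice continuously differentiable function, and T : E →ₗ[ℝ] E a linear map. Assume the invariance condition: for all x ∈ E, fderiv ℝ V x (T x) = 0. If φ₀ ∈ E is a critical point of V (fderiv ℝ V φ₀ = 0), then the second derivative of V at φ₀, regarded as a bilinear form, annihilates the direction T φ₀: for all y ∈ E, D²V(φ₀) (T φ₀) y = 0. -/

import Mathlib

/-- Tree-level Goldstone theorem: if the potential `V` is invariant in the sense
`DV(x)(Tx) = 0` for all `x` and `φ₀` is a critical point of `V`, then the Hessian of `V`
at `φ₀` annihilates the broken direction `T φ₀`. -/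
theorem goldstone_theorem (E : Type*) [NormedAddCommGroup E] [NormedSpace ℝ E]
    [CompleteSpace E]
    (V : E → ℝ) (hV : ContDiff ℝ 2 V) (T : E →ₗ[ℝ] E)
    (hinv : ∀ x, fderiv ℝ V x (T x) = 0)
    (φ₀ : E) (hcrit : fderiv ℝ V φ₀ = 0) :
    ∀ y, fderiv ℝ (fderiv ℝ V) φ₀ (T φ₀) y = 0 := by
  intro y
  set F : E → (E →L[ℝ] ℝ) := fderiv ℝ V with hF
  have hFdiff : Differentiable ℝ F := by
    have : ContDiff ℝ 1 F := hV.fderiv_right (by norm_num)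
    exact this.differentiable one_ne_zero
  -- curve through φ₀ in direction y
  have hc : HasDerivAt (fun t : ℝ => φ₀ + t • y) y 0 := by
    simpa using ((hasDerivAt_id (0:ℝ)).smul_const y).const_add φ₀
  have hFc : HasDerivAt (fun t : ℝ => F (φ₀ + t • y)) (fderiv ℝ F φ₀ y) 0 := by
    simpa [Function.comp_def] using ((hFdiff (φ₀ + (0:ℝ) • y)).hasFDerivAt.comp_hasDerivAt 0 hc)
  -- g1 : t ↦ F (c t) (T φ₀)
  have hg1 : HasDerivAt (fun t : ℝ => F (φ₀ + t • y) (T φ₀))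
      (fderiv ℝ F φ₀ y (T φ₀)) 0 := by
    simpa using hFc.clm_apply (hasDerivAt_const 0 (T φ₀))
  -- g2 : t ↦ t * F (c t) (T y), derivative at 0 is F φ₀ (T y) = 0
  have hg2 : HasDerivAt (fun t : ℝ => t * F (φ₀ + t • y) (T y)) 0 0 := by
    have h2 : HasDerivAt (fun t : ℝ => F (φ₀ + t • y) (T y))
        (fderiv ℝ F φ₀ y (T y)) 0 := by
      simpa using hFc.clm_apply (hasDerivAt_const 0 (T y))
    have := (hasDerivAt_id (0:ℝ)).mul h2
    simpa [hcrit, Pi.mul_def] using this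
  -- the sum is identically zero by invariance
  have hsum : (fun t : ℝ => F (φ₀ + t • y) (T φ₀) + t * F (φ₀ + t • y) (T y))
      = fun _ : ℝ => (0:ℝ) := by
    funext t
    have := hinv (φ₀ + t • y)
    simpa [map_add, map_smul, smul_eq_mul] using this
  have hzero : HasDerivAt (fun t : ℝ => F (φ₀ + t • y) (T φ₀) + t * F (φ₀ + t • y) (T y))
      (fderiv ℝ F φ₀ y (T φ₀) + 0) 0 := hg1.add hg2
  rw [hsum] at hzero
  have hval : fderiv ℝ F φ₀ y (T φ₀) + 0 = 0 := by
    have := hzero.deriv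
    simpa using this.symm
  have hkey : fderiv ℝ F φ₀ y (T φ₀) = 0 := by simpa using hval
  -- symmetry of second derivative
  have hsymm := ((hV.contDiffAt (x := φ₀)).isSymmSndFDerivAt (n := 2) (by simp)).eq (T φ₀) y
  show fderiv ℝ (fderiv ℝ V) φ₀ (T φ₀) y = 0
  rw [hsymm]
  exact hkey
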